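/- For positive integers x and y, the inequality C(y,2) + C(⌈2x/y⌉,2) < x + y - 1 holds if and only if (y = 2 and x ∈ {1,2}) or (y = 3 and x = 3). -/

import Mathlib

lemma two_mul_choose_two (n : ℕ) : 2 * n.choose 2 = n * (n-1) := by
  rw [Nat.choose_two_right, Nat.mul_div_cancel']
  rcases Nat.even_or_odd n with h | h
  · exact Dvd.dvd.mul_right h.two_dvd _
  · obtain ⟨k, hk⟩ := h
    exact Dvd.dvd.mul_left ⟨k, by omega⟩ _

lemma two_mul_choose_two_int (n : ℕ) (hn : 1 ≤ n) :
    2 * (n.choose 2 : ℤ) = (n:ℤ) * ((n:ℤ) - 1) := by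
  have := two_mul_choose_two n
  zify [hn] at this
  linarith

theorem lem_chiant (x y : ℕ) (hx : 0 < x) (hy : 0 < y) :
    (y.choose 2 + ((⌈(2 * (x : ℚ)) / (y : ℚ)⌉).toNat).choose 2 < x + y - 1) ↔
      ((y = 2 ∧ (x = 1 ∨ x = 2)) ∨ (y = 3 ∧ x = 3)) := by
  constructor
  · intro h
    set k := ⌈(2 * (x : ℚ)) / (y : ℚ)⌉ with hk
    have hyq : (0:ℚ) < (y:ℚ) := by exact_mod_cast hy
    have hkpos : 0 < k := Int.ceil_pos.mpr (by positivity)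
    set c := k.toNat with hc
    have hck : (k : ℚ) = (c : ℚ) := by
      rw [hc]
      exact_mod_cast (Int.toNat_of_nonneg hkpos.le).symm
    have hcpos : 0 < c := by rw [hc]; omega
    have h1 : 2 * x ≤ c * y := by
      have h' := Int.le_ceil ((2 * (x : ℚ)) / (y : ℚ))
      rw [← hk, div_le_iff₀ hyq, hck] at h'
      exact_mod_cast h'
    have h2 : c * y < 2 * x + y := by
      have h' := Int.ceil_lt_add_one ((2 * (x : ℚ)) / (y : ℚ))
      rw [← hk, hck] at h'
      have h'' : (c:ℚ) * y < (2 * (x:ℚ) / y + 1) * y :=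
        mul_lt_mul_of_pos_right h' hyq
      rw [add_mul, one_mul, div_mul_cancel₀ _ hyq.ne'] at h''
      exact_mod_cast h''
    have hcast : (y.choose 2 : ℤ) + (c.choose 2 : ℤ) < (x:ℤ) + y - 1 := by
      have hxy1 : 1 ≤ x + y := by omega
      zify [hxy1] at h
      linarith
    have H3 : (y:ℤ) * ((y:ℤ) - 1) + (c:ℤ) * ((c:ℤ) - 1) < 2 * ((x:ℤ) + y - 1) := by
      have ey := two_mul_choose_two_int y hy
      have ec := two_mul_choose_two_int c hcpos
      linarith
    have H1 : 2 * (x:ℤ) ≤ (c:ℤ) * y := by exact_mod_cast h1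
    have H2 : (c:ℤ) * y < 2 * (x:ℤ) + y := by exact_mod_cast h2
    have Hc : (1:ℤ) ≤ c := by exact_mod_cast hcpos
    have Hy : (1:ℤ) ≤ y := by exact_mod_cast hy
    have Hx : (1:ℤ) ≤ x := by exact_mod_cast hx
    clear_value c k
    clear hc hck hk h
    have hy4 : y ≤ 4 := by
      by_contra hcon
      have Hy5 : (5:ℤ) ≤ y := by exact_mod_cast (by omega : 5 ≤ y)
      nlinarith [sq_nonneg (2*(c:ℤ) - y - 1),
        mul_nonneg (by linarith : (0:ℤ) ≤ (y:ℤ) - 5) (by linarith : (0:ℤ) ≤ 3*(y:ℤ) + 1)]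
    interval_cases y
    · -- y = 1 : c = 2x, contradiction
      exfalso
      push_cast at H1 H2 H3
      have hc2x : (c:ℤ) = 2 * x := by omega
      nlinarith
    · -- y = 2 : c = x
      push_cast at H1 H2 H3
      have hcx : (c:ℤ) = x := by omega
      have hx2 : (x:ℤ) ≤ 2 := by
        by_contra hcon
        have : (3:ℤ) ≤ x := by omega
        nlinarith [mul_nonneg (by linarith : (0:ℤ) ≤ (x:ℤ) - 3) (by linarith : (0:ℤ) ≤ (x:ℤ))]
      left
      refine ⟨rfl, ?_⟩
      have : x ≤ 2 := by exact_mod_cast hx2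
      omega
    · -- y = 3
      push_cast at H1 H2 H3
      have hc3 : c ≤ 3 := by
        by_contra hcon
        have : (4:ℤ) ≤ c := by exact_mod_cast (by omega : 4 ≤ c)
        nlinarith [mul_nonneg (by linarith : (0:ℤ) ≤ (c:ℤ) - 4) (by linarith : (0:ℤ) ≤ (c:ℤ))]
      right
      refine ⟨rfl, ?_⟩
      interval_cases c <;> norm_num [Nat.choose] at hcast <;> omega
    · -- y = 4 : contradiction
      exfalso
      push_cast at H1 H2 H3
      rcases le_or_gt (c:ℤ) 2 with hcle | hcgt
      · nlinarith [mul_nonneg (by linarith : (0:ℤ) ≤ 2 - (c:ℤ)) (by linarith : (0:ℤ) ≤ 3 - (c:ℤ))]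
      · have : (3:ℤ) ≤ c := by omega
        nlinarith [mul_nonneg (by linarith : (0:ℤ) ≤ (c:ℤ) - 3) (by linarith : (0:ℤ) ≤ (c:ℤ) - 2)]
  · rintro (⟨rfl, rfl | rfl⟩ | ⟨rfl, rfl⟩)
    · have h : (⌈(2 * ((1:ℕ) : ℚ)) / ((2:ℕ) : ℚ)⌉) = 1 := by norm_num
      rw [h]
      norm_num [Nat.choose]
    · have h : (⌈(2 * ((2:ℕ) : ℚ)) / ((2:ℕ) : ℚ)⌉) = 2 := by norm_num
      rw [h]
      decide
    · have h : (⌈(2 * ((3:ℕ) : ℚ)) / ((3:ℕ) : ℚ)⌉) = 2 := by norm_num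
      rw [h]
      decide
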